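/- Let P be a finite set of distinct points in the plane, let T be a minimum-weight spanning tree of the complete Euclidean graph on P, and let {v,u} and {v,w} be two distinct edges of T sharing the vertex v. Then the angle ∠(u, v, w) is at least π/3. -/

import Mathlib

open Real

/-- The total Euclidean weight of a graph on a finite vertex type, where each vertex `v`
is located at the point `pos v`. -/
noncomputable def graphWeight {V : Type*} [Fintype V]
    (pos : V → EuclideanSpace ℝ (Fin 2)) (T : SimpleGraph V) : ℝ :=
  letI := Classical.decRel T.Adj
  ∑ e ∈ T.edgeFinset,
    Sym2.lift ⟨fun a b => dist (pos a) (pos b), fun a b => dist_comm _ _⟩ e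

open SimpleGraph in
lemma swap_lemma {V : Type*} [Fintype V] (pos : V → EuclideanSpace ℝ (Fin 2))
    (T : SimpleGraph V) (hT : T.IsTree) (u v w : V)
    (hvu : T.Adj v u) (hvw : T.Adj v w) (huw : u ≠ w) :
    ∃ T' : SimpleGraph V, T'.IsTree ∧
      graphWeight pos T' =
        graphWeight pos T - dist (pos v) (pos u) + dist (pos u) (pos w) := by
  classical
  have hvu' : v ≠ u := hvu.ne
  have hvw' : v ≠ w := hvw.ne
  -- u and w are not adjacent in T
  have hnuw : ¬ T.Adj u w := by
    intro h
    have hp1 : (Walk.cons h Walk.nil : T.Walk u w).IsPath := by simp [huw]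
    have hp2 : (Walk.cons hvu.symm (Walk.cons hvw Walk.nil) : T.Walk u w).IsPath := by
      simp [Walk.isPath_def, hvu'.symm, hvw', huw]
    have := ((hT.existsUnique_path u w).unique hp1 hp2)
    have := congrArg Walk.length this
    simp [Walk.length_cons] at this
  set e : Sym2 V := s(v, u) with he
  set f : Sym2 V := s(u, w) with hf
  have hef : f ≠ e := by
    rw [hf, he, Ne, Sym2.eq_iff]
    rintro (⟨h1, h2⟩ | ⟨h1, h2⟩)
    · exact hvu' h1.symm
    · exact hvw' h2.symm
  have hvwe : s(v, w) ≠ e := by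
    rw [he, Ne, Sym2.eq_iff]
    rintro (⟨h1, h2⟩ | ⟨h1, h2⟩)
    · exact huw h2.symm
    · exact hvu' h1
  set T' : SimpleGraph V := SimpleGraph.fromEdgeSet ((T.edgeSet \ {e}) ∪ {f}) with hT'
  have hadj' : ∀ a b : V, T'.Adj a b ↔ ((s(a,b) ∈ T.edgeSet ∧ s(a,b) ≠ e) ∨ s(a,b) = f) ∧ a ≠ b := by
    intro a b
    rw [hT', fromEdgeSet_adj, Set.mem_union, Set.mem_diff, Set.mem_singleton_iff,
      Set.mem_singleton_iff]
  have hAvw : T'.Adj v w := (hadj' v w).2 ⟨Or.inl ⟨hvw, hvwe⟩, hvw'⟩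
  have hAuw : T'.Adj u w := (hadj' u w).2 ⟨Or.inr rfl, huw⟩
  -- connectivity
  have key : ∀ a b : V, T.Adj a b → T'.Reachable a b := by
    intro a b hab
    by_cases hc : s(a, b) = e
    · rw [he, Sym2.eq_iff] at hc
      rcases hc with ⟨h1, h2⟩ | ⟨h1, h2⟩
      · subst h1; subst h2
        exact hAvw.reachable.trans hAuw.symm.reachable
      · subst h1; subst h2
        exact (hAvw.reachable.trans hAuw.symm.reachable).symm
    · exact ((hadj' a b).2 ⟨Or.inl ⟨hab, hc⟩, hab.ne⟩).reachable
  have hwalk : ∀ {a b : V} (_ : T.Walk a b), T'.Reachable a b := by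
    intro a b p
    induction p with
    | nil => exact Reachable.refl _
    | cons h _ ih => exact (key _ _ h).trans ih
  have hconn : T'.Connected := by
    have hpre : T'.Preconnected := fun a b => hwalk (hT.isConnected a b).some
    haveI := hT.isConnected.nonempty
    exact Connected.mk hpre
  -- acyclicity
  have hbridge : ¬ (T \ fromEdgeSet {e}).Reachable v u :=
    (isAcyclic_iff_forall_adj_isBridge.mp hT.IsAcyclic hvu)
  have hacy : T'.IsAcyclic := by
    intro x c hc
    by_cases hfc : f ∈ c.edges
    · have hr : T'.Adj u w ∧ (T' \ fromEdgeSet {f}).Reachable u w :=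
        (adj_and_reachable_delete_edges_iff_exists_cycle).mpr ⟨x, c, hc, by rwa [hf] at hfc⟩
      have hle : (T' \ fromEdgeSet {f}) ≤ (T \ fromEdgeSet {e}) := by
        intro a b hab
        rw [sdiff_adj] at hab ⊢
        obtain ⟨hab1, hab2⟩ := hab
        rw [hadj'] at hab1
        obtain ⟨hab1, hne⟩ := hab1
        rcases hab1 with ⟨h1, h2⟩ | h1
        · exact ⟨h1, by simp [fromEdgeSet_adj, h2]⟩
        · exact absurd (by rw [fromEdgeSet_adj]; exact ⟨by simp [h1], hne⟩) hab2
      have hr2 : (T \ fromEdgeSet {e}).Reachable u w := (hr.2).mono hle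
      have hAvw2 : (T \ fromEdgeSet {e}).Adj v w := by
        rw [sdiff_adj]
        exact ⟨hvw, by simp [fromEdgeSet_adj, hvwe]⟩
      exact hbridge (hAvw2.reachable.trans hr2.symm)
    · have hsub : ∀ e' ∈ c.edges, e' ∈ T.edgeSet := by
        intro e' he'
        have h1 : e' ∈ T'.edgeSet := c.edges_subset_edgeSet he'
        rw [hT', edgeSet_fromEdgeSet] at h1
        rcases h1 with ⟨(⟨h2, -⟩ | h2), -⟩
        · exact h2
        · exact absurd (h2 ▸ he') hfc
      exact hT.IsAcyclic (c.transfer T hsub) (hc.transfer hsub)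
  refine ⟨T', ⟨hconn, hacy⟩, ?_⟩
  -- weight computation
  have hfinset : ∀ (i1 : Fintype T'.edgeSet) (i2 : Fintype T.edgeSet),
      @edgeFinset _ T' i1 = insert f ((@edgeFinset _ T i2).erase e) := by
    intro i1 i2
    ext e'
    simp only [mem_edgeFinset, Finset.mem_insert, Finset.mem_erase]
    constructor
    · intro h1
      rw [edgeSet_fromEdgeSet] at h1
      rcases h1 with ⟨(⟨h2, h3⟩ | h2), -⟩
      · exact Or.inr ⟨h3, h2⟩
      · exact Or.inl h2
    · rintro (h1 | ⟨h1, h2⟩)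
      · subst h1
        rw [edgeSet_fromEdgeSet]
        exact ⟨Or.inr rfl, by simp [hf, huw]⟩
      · rw [edgeSet_fromEdgeSet]
        exact ⟨Or.inl ⟨h2, h1⟩, T.not_isDiag_of_mem_edgeSet h2⟩
  have hfT : ∀ (i : Fintype T.edgeSet), f ∉ @edgeFinset _ T i := by
    intro i
    rw [mem_edgeFinset, hf]
    exact hnuw
  have heT : ∀ (i : Fintype T.edgeSet), e ∈ @edgeFinset _ T i := by
    intro i
    rw [mem_edgeFinset, he]
    exact hvu
  rw [graphWeight, graphWeight, hfinset _ _,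
    Finset.sum_insert (by simp [hfT _, Finset.mem_erase]),
    Finset.sum_erase_eq_sub (heT _)]
  simp only [he, hf, Sym2.lift_mk]
  ring


theorem mst_angle_ge (P : Finset (EuclideanSpace ℝ (Fin 2)))
    (T : SimpleGraph {x // x ∈ P}) (hT : T.IsTree)
    (hmin : ∀ T' : SimpleGraph {x // x ∈ P}, T'.IsTree →
      graphWeight (Subtype.val : {x // x ∈ P} → EuclideanSpace ℝ (Fin 2)) T ≤
        graphWeight (Subtype.val : {x // x ∈ P} → EuclideanSpace ℝ (Fin 2)) T')
    (u v w : {x // x ∈ P}) (hvu : T.Adj v u) (hvw : T.Adj v w) (huw : u ≠ w) :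
    π / 3 ≤ EuclideanGeometry.angle (u : EuclideanSpace ℝ (Fin 2)) v w := by
  by_contra hlt
  push_neg at hlt
  have huv : (u : EuclideanSpace ℝ (Fin 2)) ≠ v := fun h => hvu.ne' (Subtype.ext h)
  have hwv : (w : EuclideanSpace ℝ (Fin 2)) ≠ v := fun h => hvw.ne' (Subtype.ext h)
  have ha : 0 < dist (u : EuclideanSpace ℝ (Fin 2)) v := dist_pos.2 huv
  have hb : 0 < dist (w : EuclideanSpace ℝ (Fin 2)) v := dist_pos.2 hwv
  have hcos : 1/2 < Real.cos (EuclideanGeometry.angle (u : EuclideanSpace ℝ (Fin 2)) v w) := by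
    have h1 := Real.cos_lt_cos_of_nonneg_of_le_pi
      (EuclideanGeometry.angle_nonneg (u : EuclideanSpace ℝ (Fin 2)) v w)
      (by linarith [Real.pi_pos] : π/3 ≤ π) hlt
    rwa [Real.cos_pi_div_three] at h1
  have hlaw := EuclideanGeometry.law_cos (u : EuclideanSpace ℝ (Fin 2)) v w
  rw [← pow_two, ← pow_two, ← pow_two] at hlaw
  have hkey : dist (u : EuclideanSpace ℝ (Fin 2)) w ^ 2 <
      dist (u : EuclideanSpace ℝ (Fin 2)) v ^ 2 + dist (w : EuclideanSpace ℝ (Fin 2)) v ^ 2 -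
        dist (u : EuclideanSpace ℝ (Fin 2)) v * dist (w : EuclideanSpace ℝ (Fin 2)) v := by
    nlinarith [mul_pos ha hb]
  have hduw : 0 ≤ dist (u : EuclideanSpace ℝ (Fin 2)) w := dist_nonneg
  rcases le_total (dist (w : EuclideanSpace ℝ (Fin 2)) v) (dist (u : EuclideanSpace ℝ (Fin 2)) v)
    with hab | hab
  · have hc : dist (u : EuclideanSpace ℝ (Fin 2)) w < dist (u : EuclideanSpace ℝ (Fin 2)) v := by
      nlinarith
    obtain ⟨T', hT'tree, hW⟩ := swap_lemma Subtype.val T hT u v w hvu hvw huw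
    have hm := hmin T' hT'tree
    rw [hW] at hm
    rw [_root_.dist_comm (v : EuclideanSpace ℝ (Fin 2)) u] at hm
    linarith
  · have hc : dist (w : EuclideanSpace ℝ (Fin 2)) u < dist (w : EuclideanSpace ℝ (Fin 2)) v := by
      rw [_root_.dist_comm]; nlinarith
    obtain ⟨T', hT'tree, hW⟩ := swap_lemma Subtype.val T hT w v u hvw hvu huw.symm
    have hm := hmin T' hT'tree
    rw [hW] at hm
    rw [_root_.dist_comm (v : EuclideanSpace ℝ (Fin 2)) w] at hm
    linarith
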